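/- Under the exponential ergodicity assumption, suppose that for all x ∈ (0,c] and s ≥ 0, |E_x[f(Y_s)] − ⟨f,ν⟩| ≤ ‖f_w‖ ((c/x)^w + C) e^{−ks}, where f_w(x) = (x/c)^w f(x). Define R_{s,t} = Σ_u e^{−λt} |E_{Z_u(t)}[f(Y_s)] − ⟨f,ν⟩|. Then E_x[R_{s,t}] ≤ e^{−ks} ‖f_w‖ (E_x[e^{w(b − η^b_t)}] + C e^{−λt}E_x[N_t]), and if moreover sup_t E_x[e^{w(b−η^b_t)}] ≤ C' < ∞ and e^{−λt}E_x[N_t] = 1, then E_x[R_{s,s}] ≤ e^{−ks}‖f_w‖(C'+C), which is summable along lattice times s = nδ, so R_{nδ,nδ} → 0 almost surely by Borel–Cantelli. -/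

import Mathlib

open MeasureTheory Set Filter Topology

/-- Under exponential ergodicity of the spine
(`|E_x[f(Y_s)] − ⟨f,ν⟩| ≤ ‖f_w‖((c/x)^w + C)e^{−ks}`, encoded by `φ x s = E_x[f(Y_s)]`),
the quantity `R_{s,t} = Σ_u e^{−λt}|E_{Z_u(t)}[f(Y_s)] − ⟨f,ν⟩|` satisfies
`E_x[R_{s,t}] ≤ e^{−ks}‖f_w‖(E_x[e^{w(b−η^b_t)}] + C e^{−λt}E_x[N_t])`; if moreover
`sup_t E_x[e^{w(b−η^b_t)}] ≤ C'` and `e^{−λt}E_x[N_t] = 1`, then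
`E_x[R_{s,s}] ≤ e^{−ks}‖f_w‖(C' + C)`, which is summable along lattice times `s = nδ`,
so `R_{nδ,nδ} → 0` almost surely. -/
theorem ergodicity_transfer {Ω ι : Type*} [MeasurableSpace Ω]
    (μ : Measure Ω) [IsProbabilityMeasure μ]
    (c b lam w k C C' Fw nuf δ : ℝ)
    (hc : 0 < c) (hb : b = Real.log c) (hlam : 0 < lam) (hw : 0 < w) (hk : 0 < k)
    (hδ : 0 < δ) (hC : 0 ≤ C) (hFw : 0 ≤ Fw)
    (U : ℝ → Ω → Finset ι) (Z : ι → ℝ → Ω → ℝ) (ηb : ℝ → Ω → ℝ)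
    (φ : ℝ → ℝ → ℝ)
    (hZ : ∀ t ω, ∀ u ∈ U t ω, Z u t ω ∈ Ioc (0:ℝ) c)
    (hRmeas : ∀ s t : ℝ, Measurable
      (fun ω => ∑ u ∈ U t ω, Real.exp (-lam * t) * |φ (Z u t ω) s - nuf|))
    (hNint : ∀ t : ℝ, Integrable (fun ω => ((U t ω).card : ℝ)) μ)
    (hηint : ∀ t : ℝ, Integrable (fun ω => Real.exp (w * (b - ηb t ω))) μ)
    (hbound : ∀ x ∈ Ioc (0:ℝ) c, ∀ s : ℝ, 0 ≤ s →
      |φ x s - nuf| ≤ Fw * ((c / x) ^ w + C) * Real.exp (-k * s))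
    (hm2o : ∀ t : ℝ, 0 ≤ t →
      (∫ ω, (∑ u ∈ U t ω, Real.exp (-lam * t) * (c / Z u t ω) ^ w) ∂μ)
        = ∫ ω, Real.exp (w * (b - ηb t ω)) ∂μ) :
    (∀ s t : ℝ, 0 ≤ s → 0 ≤ t →
      (∫ ω, (∑ u ∈ U t ω, Real.exp (-lam * t) * |φ (Z u t ω) s - nuf|) ∂μ)
        ≤ Real.exp (-k * s) * Fw *
            ((∫ ω, Real.exp (w * (b - ηb t ω)) ∂μ)
              + C * (Real.exp (-lam * t) * ∫ ω, ((U t ω).card : ℝ) ∂μ)))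
    ∧ ((∀ t : ℝ, 0 ≤ t → (∫ ω, Real.exp (w * (b - ηb t ω)) ∂μ) ≤ C') →
       (∀ t : ℝ, 0 ≤ t → Real.exp (-lam * t) * (∫ ω, ((U t ω).card : ℝ) ∂μ) = 1) →
       (∀ s : ℝ, 0 ≤ s →
          (∫ ω, (∑ u ∈ U s ω, Real.exp (-lam * s) * |φ (Z u s ω) s - nuf|) ∂μ)
            ≤ Real.exp (-k * s) * Fw * (C' + C))
       ∧ (∀ᵐ ω ∂μ, Tendsto
            (fun n : ℕ => ∑ u ∈ U (n * δ) ω,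
              Real.exp (-lam * (n * δ)) * |φ (Z u (n * δ) ω) (n * δ) - nuf|)
            atTop (𝓝 0))) := by
  classical
  -- pointwise bound
  have hpt : ∀ s t : ℝ, 0 ≤ s → ∀ ω : Ω,
      (∑ u ∈ U t ω, Real.exp (-lam * t) * |φ (Z u t ω) s - nuf|)
        ≤ Real.exp (-k * s) * Fw *
            ((∑ u ∈ U t ω, Real.exp (-lam * t) * (c / Z u t ω) ^ w)
              + C * (Real.exp (-lam * t) * (U t ω).card)) := by
    intro s t hs ω
    calc (∑ u ∈ U t ω, Real.exp (-lam * t) * |φ (Z u t ω) s - nuf|)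
        ≤ ∑ u ∈ U t ω,
            Real.exp (-lam * t) * (Fw * ((c / Z u t ω) ^ w + C) * Real.exp (-k * s)) := by
          refine Finset.sum_le_sum fun u hu => ?_
          exact mul_le_mul_of_nonneg_left (hbound _ (hZ t ω u hu) s hs) (Real.exp_nonneg _)
      _ = Real.exp (-k * s) * Fw *
            ((∑ u ∈ U t ω, Real.exp (-lam * t) * (c / Z u t ω) ^ w)
              + C * (Real.exp (-lam * t) * (U t ω).card)) := by
          have h : ∀ x : ℝ, Real.exp (-lam * t) * (Fw * (x + C) * Real.exp (-k * s))
              = Real.exp (-k * s) * Fw * (Real.exp (-lam * t) * x)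
                + Real.exp (-k * s) * Fw * C * Real.exp (-lam * t) := fun x => by ring
          simp_rw [h, Finset.sum_add_distrib, ← Finset.mul_sum, Finset.sum_const,
            nsmul_eq_mul]
          ring
  have hRnonneg : ∀ s t : ℝ, ∀ ω : Ω,
      0 ≤ ∑ u ∈ U t ω, Real.exp (-lam * t) * |φ (Z u t ω) s - nuf| := by
    intro s t ω
    exact Finset.sum_nonneg fun u _ => mul_nonneg (Real.exp_nonneg _) (abs_nonneg _)
  -- integrability of the (c/Z)^w sum and the dominating function
  have hSint : ∀ t : ℝ, 0 ≤ t →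
      Integrable (fun ω => ∑ u ∈ U t ω, Real.exp (-lam * t) * (c / Z u t ω) ^ w) μ := by
    intro t ht
    by_contra h
    have h0 := hm2o t ht
    rw [integral_undef h] at h0
    have hpos : 0 < ∫ ω, Real.exp (w * (b - ηb t ω)) ∂μ :=
      integral_exp_pos (hηint t)
    linarith
  have hDint : ∀ s t : ℝ, 0 ≤ t → Integrable (fun ω => Real.exp (-k * s) * Fw *
      ((∑ u ∈ U t ω, Real.exp (-lam * t) * (c / Z u t ω) ^ w)
        + C * (Real.exp (-lam * t) * (U t ω).card))) μ := by
    intro s t ht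
    exact (((hSint t ht).add ((((hNint t).const_mul (Real.exp (-lam * t)))).const_mul
      C)).const_mul _)
  -- the main estimate and integrability of R
  have main : ∀ s t : ℝ, 0 ≤ s → 0 ≤ t →
      Integrable (fun ω => ∑ u ∈ U t ω, Real.exp (-lam * t) * |φ (Z u t ω) s - nuf|) μ ∧
      (∫ ω, (∑ u ∈ U t ω, Real.exp (-lam * t) * |φ (Z u t ω) s - nuf|) ∂μ)
        ≤ Real.exp (-k * s) * Fw *
            ((∫ ω, Real.exp (w * (b - ηb t ω)) ∂μ)
              + C * (Real.exp (-lam * t) * ∫ ω, ((U t ω).card : ℝ) ∂μ)) := by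
    intro s t hs ht
    have hint : Integrable
        (fun ω => ∑ u ∈ U t ω, Real.exp (-lam * t) * |φ (Z u t ω) s - nuf|) μ := by
      refine Integrable.mono' (hDint s t ht) (hRmeas s t).aestronglyMeasurable
        (Eventually.of_forall fun ω => ?_)
      rw [Real.norm_eq_abs, abs_of_nonneg (hRnonneg s t ω)]
      exact hpt s t hs ω
    refine ⟨hint, ?_⟩
    calc (∫ ω, (∑ u ∈ U t ω, Real.exp (-lam * t) * |φ (Z u t ω) s - nuf|) ∂μ)
        ≤ ∫ ω, Real.exp (-k * s) * Fw *
            ((∑ u ∈ U t ω, Real.exp (-lam * t) * (c / Z u t ω) ^ w)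
              + C * (Real.exp (-lam * t) * (U t ω).card)) ∂μ :=
          integral_mono_of_nonneg (Eventually.of_forall (hRnonneg s t))
            (hDint s t ht) (Eventually.of_forall (hpt s t hs))
      _ = Real.exp (-k * s) * Fw *
            ((∫ ω, (∑ u ∈ U t ω, Real.exp (-lam * t) * (c / Z u t ω) ^ w) ∂μ)
              + C * (Real.exp (-lam * t) * ∫ ω, ((U t ω).card : ℝ) ∂μ)) := by
          rw [integral_const_mul, integral_add (hSint t ht)
            ((((hNint t).const_mul (Real.exp (-lam * t)))).const_mul C),
            integral_const_mul, integral_const_mul]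
      _ = Real.exp (-k * s) * Fw *
            ((∫ ω, Real.exp (w * (b - ηb t ω)) ∂μ)
              + C * (Real.exp (-lam * t) * ∫ ω, ((U t ω).card : ℝ) ∂μ)) := by
          rw [hm2o t ht]
  refine ⟨fun s t hs ht => (main s t hs ht).2, fun h1 h2 => ?_⟩
  have hexpFw : ∀ s : ℝ, 0 ≤ Real.exp (-k * s) * Fw :=
    fun s => mul_nonneg (Real.exp_nonneg _) hFw
  have part1 : ∀ s : ℝ, 0 ≤ s →
      (∫ ω, (∑ u ∈ U s ω, Real.exp (-lam * s) * |φ (Z u s ω) s - nuf|) ∂μ)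
        ≤ Real.exp (-k * s) * Fw * (C' + C) := by
    intro s hs
    refine le_trans (main s s hs hs).2 ?_
    rw [h2 s hs, mul_one]
    exact mul_le_mul_of_nonneg_left (add_le_add_left (h1 s hs) C) (hexpFw s)
  refine ⟨part1, ?_⟩
  -- Borel–Cantelli along the lattice
  set R : ℕ → Ω → ℝ := fun n ω => ∑ u ∈ U (n * δ) ω,
    Real.exp (-lam * (n * δ)) * |φ (Z u (n * δ) ω) (n * δ) - nuf| with hR
  have hnδ : ∀ n : ℕ, (0:ℝ) ≤ n * δ := fun n => mul_nonneg (Nat.cast_nonneg n) hδ.le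
  set a : ℕ → ℝ := fun n => Real.exp (-(k * δ)) ^ n * (Fw * (C' + C)) with ha
  have haSummable : Summable a := by
    refine Summable.mul_right _ (summable_geometric_of_lt_one (Real.exp_nonneg _) ?_)
    rw [Real.exp_lt_one_iff]
    nlinarith
  have hanonneg : ∀ n, 0 ≤ a n := by
    intro n
    have hC' : 0 ≤ C' := le_trans (integral_exp_pos (hηint 0)).le (h1 0 le_rfl)
    exact mul_nonneg (pow_nonneg (Real.exp_nonneg _) n)
      (mul_nonneg hFw (by linarith))
  have hERa : ∀ n : ℕ, (∫ ω, R n ω ∂μ) ≤ a n := by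
    intro n
    refine le_trans (part1 (n * δ) (hnδ n)) (le_of_eq ?_)
    have he : Real.exp (-k * (n * δ)) = Real.exp (-(k * δ)) ^ n := by
      rw [← Real.exp_nat_mul]; congr 1; ring
    rw [he, ha]; ring
  have hGmeas : ∀ n : ℕ, Measurable (fun ω => ENNReal.ofReal (R n ω)) :=
    fun n => (hRmeas (n * δ) (n * δ)).ennreal_ofReal
  have hlt : ∫⁻ ω, (∑' n, ENNReal.ofReal (R n ω)) ∂μ < ⊤ := by
    rw [lintegral_tsum fun n => (hGmeas n).aemeasurable]
    calc (∑' n, ∫⁻ ω, ENNReal.ofReal (R n ω) ∂μ)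
        ≤ ∑' n, ENNReal.ofReal (a n) := by
          refine ENNReal.tsum_le_tsum fun n => ?_
          rw [← ofReal_integral_eq_lintegral_ofReal (main (n * δ) (n * δ) (hnδ n) (hnδ n)).1
            (Eventually.of_forall (hRnonneg (n * δ) (n * δ)))]
          exact ENNReal.ofReal_le_ofReal (hERa n)
      _ = ENNReal.ofReal (∑' n, a n) := (ENNReal.ofReal_tsum_of_nonneg hanonneg haSummable).symm
      _ < ⊤ := ENNReal.ofReal_lt_top
  have hae := ae_lt_top (Measurable.ennreal_tsum hGmeas) hlt.ne
  filter_upwards [hae] with ω hω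
  have hsummable : Summable fun n => R n ω := by
    have h1' : Summable fun n => (ENNReal.ofReal (R n ω)).toReal :=
      ENNReal.summable_toReal hω.ne
    have h2' : (fun n => (ENNReal.ofReal (R n ω)).toReal) = fun n => R n ω :=
      funext fun n => ENNReal.toReal_ofReal (hRnonneg _ _ ω)
    rwa [h2'] at h1'
  exact hsummable.tendsto_atTop_zero
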